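/- arXiv:1806.05619 — 4 statements merged into one kernel-verified Lean document; each statement's English description precedes it below -/
import Mathlib

section
/- Let ρ > 1, β > 0, γ > 0, λ > 0 be real numbers, L a natural number, R a positive integer, K > 0 a constant, C_0, ..., C_L positive real numbers (the per-sample costs), and let h_0, ..., h_{L+1} be positive reals satisfying h_ℓ = ρ · h_{ℓ+1} for every ℓ = 0, ..., L. Define the level sample sizes N_ℓ = (K · h_ℓ^{β+γ})^{λ/(λ+1)} for ℓ = 0, ..., L+1, and the recycled sample sizes N'_ℓ = N_ℓ − N_{ℓ+1}. Then the cost with sample recycling equals the cost without recycling reduced by the factor 1 − ρ^{−(β+γ)λ/(λ+1)}; that is, Σ_{ℓ=0}^{L} R · N'_ℓ · C_ℓ = (1 − ρ^{−(β+γ)λ/(λ+1)}) · Σ_{ℓ=0}^{L} R · N_ℓ · C_ℓ. -/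
open Finset

/-- Proposition 1 (cost reduction factor of MG-ML(Q)MC with geometric refinement). -/
theorem mgmlqmc_cost_reduction
    (ρ β γ lam K : ℝ) (hρ : 1 < ρ) (hβ : 0 < β) (hγ : 0 < γ) (hlam : 0 < lam)
    (hK : 0 < K) (L : ℕ) (R : ℕ) (hR : 0 < R)
    (C h : ℕ → ℝ)
    (hC : ∀ ℓ ≤ L, 0 < C ℓ)
    (hh : ∀ ℓ ≤ L + 1, 0 < h ℓ)
    (hgeo : ∀ ℓ ≤ L, h ℓ = ρ * h (ℓ + 1))
    (N N' : ℕ → ℝ)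
    (hN : ∀ ℓ ≤ L + 1, N ℓ = (K * h ℓ ^ (β + γ)) ^ (lam / (lam + 1)))
    (hN' : ∀ ℓ ≤ L, N' ℓ = N ℓ - N (ℓ + 1)) :
    ∑ ℓ ∈ range (L + 1), (R : ℝ) * N' ℓ * C ℓ =
      (1 - ρ ^ (-(β + γ) * lam / (lam + 1))) *
        ∑ ℓ ∈ range (L + 1), (R : ℝ) * N ℓ * C ℓ := by
  have hρ0 : (0 : ℝ) < ρ := lt_trans one_pos hρ
  have key : ∀ ℓ ≤ L, N (ℓ + 1) = ρ ^ (-(β + γ) * lam / (lam + 1)) * N ℓ := by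
    intro ℓ hℓ
    have hh1 : 0 < h (ℓ + 1) := hh (ℓ + 1) (by omega)
    have hh0 : 0 < h ℓ := hh ℓ (by omega)
    rw [hN (ℓ + 1) (by omega), hN ℓ (by omega), hgeo ℓ hℓ]
    rw [Real.mul_rpow (le_of_lt hρ0) (le_of_lt hh1)]
    rw [mul_comm (ρ ^ (β + γ)) (h (ℓ + 1) ^ (β + γ)), ← mul_assoc,
      Real.mul_rpow (mul_nonneg (le_of_lt hK) (le_of_lt (Real.rpow_pos_of_pos hh1 _)))
        (le_of_lt (Real.rpow_pos_of_pos hρ0 _)),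
      ← Real.rpow_mul (le_of_lt hρ0), ← mul_assoc, mul_comm (ρ ^ (-(β + γ) * lam / (lam + 1))),
      mul_assoc, ← Real.rpow_add hρ0]
    have he : -(β + γ) * lam / (lam + 1) + (β + γ) * (lam / (lam + 1)) = 0 := by ring
    rw [he, Real.rpow_zero, mul_one]
  rw [Finset.mul_sum]
  refine Finset.sum_congr rfl fun ℓ hℓ => ?_
  have hℓL : ℓ ≤ L := by simpa using Finset.mem_range_succ_iff.mp hℓ
  rw [hN' ℓ hℓL, key ℓ hℓL]
  ring
end

section
/- Let L be a natural number, λ > 0, ε > 0, and let a_0, ..., a_L > 0 (the per-level costs) and b_0, ..., b_L > 0 (the per-level variance contributions) be real numbers. Define S = Σ_{τ=0}^{L} a_τ^{1/(λ+1)} · b_τ^{λ/(λ+1)} and N*_ℓ = ((2/ε²) · S)^{λ} · (b_ℓ / a_ℓ)^{λ/(λ+1)}. Then: (i) the sequence (N*_ℓ) satisfies the constraint Σ_{ℓ=0}^{L} b_ℓ · (N*_ℓ)^{−1/λ} = ε²/2 with equality; (ii) its cost is Σ_{ℓ=0}^{L} a_ℓ · N*_ℓ = (2/ε²)^{λ}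 · S^{λ+1}; and (iii) for every sequence of positive reals N_0, ..., N_L with Σ_{ℓ=0}^{L} b_ℓ · N_ℓ^{−1/λ} ≤ ε²/2, one has Σ_{ℓ=0}^{L} a_ℓ · N_ℓ ≥ (2/ε²)^{λ} · S^{λ+1}. Hence (N*_ℓ) minimizes the cost subject to the variance constraint. -/
open Finset

private lemma log_eq_aux {x y : ℝ} (hx : 0 < x) (hy : 0 < y)
    (h : Real.log x = Real.log y) : x = y := by
  rw [← Real.exp_log hx, ← Real.exp_log hy, h]

private lemma mlqmc_id1 {A B c lam : ℝ} (hA : 0 < A) (hB : 0 < B) (hc : 0 < c)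
    (hlam : 0 < lam) :
    B * (c ^ lam * (B / A) ^ (lam / (lam + 1))) ^ (-1 / lam)
      = c⁻¹ * (A ^ (1 / (lam + 1)) * B ^ (lam / (lam + 1))) := by
  have h1 : (0:ℝ) < lam + 1 := by linarith
  apply log_eq_aux (by positivity) (by positivity)
  rw [Real.log_mul (ne_of_gt hB) (by positivity),
    Real.log_rpow (by positivity),
    Real.log_mul (by positivity) (by positivity),
    Real.log_rpow hc, Real.log_rpow (by positivity),
    Real.log_div (ne_of_gt hB) (ne_of_gt hA),
    Real.log_mul (by positivity) (by positivity),
    Real.log_inv,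
    Real.log_mul (by positivity) (by positivity),
    Real.log_rpow hA, Real.log_rpow hB]
  field_simp
  ring

private lemma mlqmc_id2 {A B c lam : ℝ} (hA : 0 < A) (hB : 0 < B) (hc : 0 < c)
    (hlam : 0 < lam) :
    A * (c ^ lam * (B / A) ^ (lam / (lam + 1)))
      = c ^ lam * (A ^ (1 / (lam + 1)) * B ^ (lam / (lam + 1))) := by
  have h1 : (0:ℝ) < lam + 1 := by linarith
  apply log_eq_aux (by positivity) (by positivity)
  rw [Real.log_mul (ne_of_gt hA) (by positivity),
    Real.log_mul (by positivity) (by positivity),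
    Real.log_rpow hc, Real.log_rpow (by positivity),
    Real.log_div (ne_of_gt hB) (ne_of_gt hA),
    Real.log_mul (by positivity) (by positivity),
    Real.log_rpow hc,
    Real.log_mul (by positivity) (by positivity),
    Real.log_rpow hA, Real.log_rpow hB]
  field_simp
  ring

private lemma mlqmc_id3 {A B n lam : ℝ} (hA : 0 < A) (hB : 0 < B) (hn : 0 < n)
    (hlam : 0 < lam) :
    A ^ (1 / (lam + 1)) * B ^ (lam / (lam + 1))
      = (A * n) ^ (1 / (lam + 1)) * (B * n ^ (-1 / lam)) ^ (lam / (lam + 1)) := by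
  have h1 : (0:ℝ) < lam + 1 := by linarith
  apply log_eq_aux (by positivity) (by positivity)
  rw [Real.log_mul (by positivity) (by positivity),
    Real.log_rpow hA, Real.log_rpow hB,
    Real.log_mul (by positivity) (by positivity),
    Real.log_rpow (by positivity), Real.log_rpow (by positivity),
    Real.log_mul (ne_of_gt hA) (ne_of_gt hn),
    Real.log_mul (ne_of_gt hB) (by positivity),
    Real.log_rpow hn]
  field_simp
  ring

/-- Constrained optimization underlying the optimal MLQMC sample sizes: the
explicit choice `Nstar` saturates the variance constraint and minimizes the
total cost among all positive sample allocations satisfying the constraint. -/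
theorem mlqmc_optimal_allocation
    (L : ℕ) (lam ε : ℝ) (hlam : 0 < lam) (hε : 0 < ε)
    (a b : ℕ → ℝ)
    (ha : ∀ ℓ ≤ L, 0 < a ℓ) (hb : ∀ ℓ ≤ L, 0 < b ℓ)
    (S : ℝ)
    (hS : S = ∑ τ ∈ range (L + 1), a τ ^ (1 / (lam + 1)) * b τ ^ (lam / (lam + 1)))
    (Nstar : ℕ → ℝ)
    (hNstar : ∀ ℓ ≤ L, Nstar ℓ = (2 / ε ^ 2 * S) ^ lam * (b ℓ / a ℓ) ^ (lam / (lam + 1))) :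
    (∑ ℓ ∈ range (L + 1), b ℓ * Nstar ℓ ^ (-1 / lam) = ε ^ 2 / 2) ∧
    (∑ ℓ ∈ range (L + 1), a ℓ * Nstar ℓ = (2 / ε ^ 2) ^ lam * S ^ (lam + 1)) ∧
    (∀ N : ℕ → ℝ, (∀ ℓ ≤ L, 0 < N ℓ) →
      ∑ ℓ ∈ range (L + 1), b ℓ * N ℓ ^ (-1 / lam) ≤ ε ^ 2 / 2 →
      (2 / ε ^ 2) ^ lam * S ^ (lam + 1) ≤ ∑ ℓ ∈ range (L + 1), a ℓ * N ℓ) := by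
  have hlam1 : (0:ℝ) < lam + 1 := by linarith
  have hlamne : lam ≠ 0 := ne_of_gt hlam
  have hlam1ne : lam + 1 ≠ 0 := ne_of_gt hlam1
  have hε2 : (0:ℝ) < ε ^ 2 := by positivity
  have hS0 : 0 < S := by
    rw [hS]
    refine Finset.sum_pos (fun τ hτ => ?_) ⟨0, by simp⟩
    have hτ' : τ ≤ L := Nat.lt_succ_iff.mp (Finset.mem_range.mp hτ)
    exact mul_pos (Real.rpow_pos_of_pos (ha τ hτ') _) (Real.rpow_pos_of_pos (hb τ hτ') _)
  have hc0 : (0:ℝ) < 2 / ε ^ 2 * S := by positivity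
  -- part (i)
  have part1 : ∑ ℓ ∈ range (L + 1), b ℓ * Nstar ℓ ^ (-1 / lam) = ε ^ 2 / 2 := by
    have hterm : ∀ ℓ ∈ range (L + 1),
        b ℓ * Nstar ℓ ^ (-1 / lam)
          = (2 / ε ^ 2 * S)⁻¹ * (a ℓ ^ (1 / (lam + 1)) * b ℓ ^ (lam / (lam + 1))) := by
      intro ℓ hℓ
      have hℓ' : ℓ ≤ L := Nat.lt_succ_iff.mp (Finset.mem_range.mp hℓ)
      rw [hNstar ℓ hℓ']
      exact mlqmc_id1 (ha ℓ hℓ') (hb ℓ hℓ') hc0 hlam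
    rw [Finset.sum_congr rfl hterm, ← Finset.mul_sum, ← hS]
    field_simp
  -- part (ii)
  have part2 : ∑ ℓ ∈ range (L + 1), a ℓ * Nstar ℓ = (2 / ε ^ 2) ^ lam * S ^ (lam + 1) := by
    have hterm : ∀ ℓ ∈ range (L + 1),
        a ℓ * Nstar ℓ
          = (2 / ε ^ 2 * S) ^ lam * (a ℓ ^ (1 / (lam + 1)) * b ℓ ^ (lam / (lam + 1))) := by
      intro ℓ hℓ
      have hℓ' : ℓ ≤ L := Nat.lt_succ_iff.mp (Finset.mem_range.mp hℓ)
      rw [hNstar ℓ hℓ']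
      exact mlqmc_id2 (ha ℓ hℓ') (hb ℓ hℓ') hc0 hlam
    rw [Finset.sum_congr rfl hterm, ← Finset.mul_sum, ← hS,
      Real.mul_rpow (by positivity) (le_of_lt hS0),
      Real.rpow_add_one (ne_of_gt hS0)]
    ring
  refine ⟨part1, part2, ?_⟩
  -- part (iii) : Hölder
  intro N hN hconstraint
  set p : ℝ := lam + 1 with hp
  set q : ℝ := (lam + 1) / lam with hq
  have hpq : Real.HolderConjugate p q := by
    rw [Real.holderConjugate_iff]
    constructor
    · rw [hp]; linarith
    · rw [hp, hq]; field_simp; ring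
  have h1q : 1 / q = lam / (lam + 1) := by rw [hq]; rw [one_div_div]
  set f : ℕ → ℝ := fun ℓ => (a ℓ * N ℓ) ^ (1 / p) with hf
  set g : ℕ → ℝ := fun ℓ => (b ℓ * N ℓ ^ (-1 / lam)) ^ (1 / q) with hg
  have hSfg : S = ∑ ℓ ∈ range (L + 1), f ℓ * g ℓ := by
    rw [hS]
    refine Finset.sum_congr rfl (fun ℓ hℓ => ?_)
    have hℓ' : ℓ ≤ L := Nat.lt_succ_iff.mp (Finset.mem_range.mp hℓ)
    rw [hf, hg]
    simp only [h1q, hp]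
    exact mlqmc_id3 (ha ℓ hℓ') (hb ℓ hℓ') (hN ℓ hℓ') hlam
  have hfp : ∀ ℓ ∈ range (L + 1), f ℓ ^ p = a ℓ * N ℓ := by
    intro ℓ hℓ
    have hℓ' : ℓ ≤ L := Nat.lt_succ_iff.mp (Finset.mem_range.mp hℓ)
    have h0 : (0:ℝ) ≤ a ℓ * N ℓ := le_of_lt (mul_pos (ha ℓ hℓ') (hN ℓ hℓ'))
    rw [hf, ← Real.rpow_mul h0, one_div, inv_mul_cancel₀ hpq.ne_zero, Real.rpow_one]
  have hgq : ∀ ℓ ∈ range (L + 1), g ℓ ^ q = b ℓ * N ℓ ^ (-1 / lam) := by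
    intro ℓ hℓ
    have hℓ' : ℓ ≤ L := Nat.lt_succ_iff.mp (Finset.mem_range.mp hℓ)
    have h0 : (0:ℝ) ≤ b ℓ * N ℓ ^ (-1 / lam) :=
      le_of_lt (mul_pos (hb ℓ hℓ') (Real.rpow_pos_of_pos (hN ℓ hℓ') _))
    rw [hg, ← Real.rpow_mul h0, one_div, inv_mul_cancel₀ hpq.symm.ne_zero, Real.rpow_one]
  have hholder : S ≤ (∑ i ∈ range (L + 1), f i ^ p) ^ (1 / p) *
      (∑ i ∈ range (L + 1), g i ^ q) ^ (1 / q) := by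
    rw [hSfg]
    refine Real.inner_le_Lp_mul_Lq_of_nonneg (s := range (L + 1)) hpq ?_ ?_ <;>
      intro i hi <;>
      have hi' : i ≤ L := Nat.lt_succ_iff.mp (Finset.mem_range.mp hi)
    · exact Real.rpow_nonneg (le_of_lt (mul_pos (ha i hi') (hN i hi'))) _
    · exact Real.rpow_nonneg
        (le_of_lt (mul_pos (hb i hi') (Real.rpow_pos_of_pos (hN i hi') _))) _
  rw [Finset.sum_congr rfl hfp, Finset.sum_congr rfl hgq] at hholder
  set C : ℝ := ∑ ℓ ∈ range (L + 1), a ℓ * N ℓ with hC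
  have hC0 : 0 < C := by
    refine Finset.sum_pos (fun τ hτ => ?_) ⟨0, by simp⟩
    have hτ' : τ ≤ L := Nat.lt_succ_iff.mp (Finset.mem_range.mp hτ)
    exact mul_pos (ha τ hτ') (hN τ hτ')
  have hVhalf : (∑ ℓ ∈ range (L + 1), b ℓ * N ℓ ^ (-1 / lam)) ^ (1 / q)
      ≤ (ε ^ 2 / 2) ^ (1 / q) := by
    apply Real.rpow_le_rpow _ hconstraint (by positivity)
    refine Finset.sum_nonneg (fun τ hτ => ?_)
    have hτ' : τ ≤ L := Nat.lt_succ_iff.mp (Finset.mem_range.mp hτ)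
    exact le_of_lt (mul_pos (hb τ hτ') (Real.rpow_pos_of_pos (hN τ hτ') _))
  have hS2 : S ≤ C ^ (1 / p) * (ε ^ 2 / 2) ^ (1 / q) :=
    hholder.trans (mul_le_mul_of_nonneg_left hVhalf (Real.rpow_nonneg (le_of_lt hC0) _))
  have hhp : (0:ℝ) < ε ^ 2 / 2 := by positivity
  have hS3 : S * (ε ^ 2 / 2) ^ (-(1 / q)) ≤ C ^ (1 / p) := by
    rw [Real.rpow_neg (le_of_lt hhp),
      mul_inv_le_iff₀ (Real.rpow_pos_of_pos hhp _)]
    exact hS2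
  have hS4 : (S * (ε ^ 2 / 2) ^ (-(1 / q))) ^ p ≤ C := by
    have := Real.rpow_le_rpow (by positivity) hS3 (le_of_lt hpq.pos)
    rwa [← Real.rpow_mul (le_of_lt hC0), one_div_mul_cancel hpq.ne_zero,
      Real.rpow_one] at this
  refine le_trans (le_of_eq ?_) hS4
  rw [Real.mul_rpow (le_of_lt hS0) (Real.rpow_nonneg (le_of_lt hhp) _),
    ← Real.rpow_mul (le_of_lt hhp)]
  have hexp : -(1 / q) * p = -lam := by
    rw [hp, hq]; field_simp
  rw [hexp, Real.rpow_neg (le_of_lt hhp), ← Real.inv_rpow (le_of_lt hhp)]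
  rw [show (ε ^ 2 / 2)⁻¹ = 2 / ε ^ 2 by field_simp, hp]
  ring
end

section
/- Let L be a natural number, ε > 0, and let V_0, ..., V_L > 0 (the level variances) and C_0, ..., C_L > 0 (the per-sample costs) be real numbers. Define N_ℓ = (2/ε²) · √(V_ℓ / C_ℓ) · Σ_{τ=0}^{L} √(V_τ · C_τ). Then: (i) Σ_{ℓ=0}^{L} V_ℓ / N_ℓ = ε²/2; (ii) the total cost is Σ_{ℓ=0}^{L} N_ℓ · C_ℓ = (2/ε²) · (Σ_{ℓ=0}^{L} √(V_ℓ · C_ℓ))²; and (iii) for every sequence of positive reals M_0, ..., M_L satisfying Σ_{ℓ=0}^{L} V_ℓ / M_ℓ ≤ ε²/2, one has Σ_{ℓ=0}^{L} M_ℓ · C_ℓ ≥ (2/ε²) · (Σ_{ℓ=0}^{L} √(V_ℓ · C_ℓ))². Hence the choice N_ℓ minimizes the total cost subject to the variance constraint. -/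
open Finset Real

/-- Classic optimal sample-size allocation for the Multilevel Monte Carlo
estimator: `N ℓ = (2/ε²) √(Vℓ/Cℓ) Σ_τ √(Vτ Cτ)` saturates the variance
constraint and minimizes the total cost among all positive allocations. -/
theorem mlmc_optimal_allocation
    (L : ℕ) (ε : ℝ) (hε : 0 < ε)
    (V C : ℕ → ℝ)
    (hV : ∀ ℓ ≤ L, 0 < V ℓ) (hC : ∀ ℓ ≤ L, 0 < C ℓ)
    (N : ℕ → ℝ)
    (hN : ∀ ℓ ≤ L, N ℓ = 2 / ε ^ 2 * Real.sqrt (V ℓ / C ℓ) *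
      ∑ τ ∈ range (L + 1), Real.sqrt (V τ * C τ)) :
    (∑ ℓ ∈ range (L + 1), V ℓ / N ℓ = ε ^ 2 / 2) ∧
    (∑ ℓ ∈ range (L + 1), N ℓ * C ℓ =
      2 / ε ^ 2 * (∑ ℓ ∈ range (L + 1), Real.sqrt (V ℓ * C ℓ)) ^ 2) ∧
    (∀ M : ℕ → ℝ, (∀ ℓ ≤ L, 0 < M ℓ) →
      ∑ ℓ ∈ range (L + 1), V ℓ / M ℓ ≤ ε ^ 2 / 2 →
      2 / ε ^ 2 * (∑ ℓ ∈ range (L + 1), Real.sqrt (V ℓ * C ℓ)) ^ 2 ≤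
        ∑ ℓ ∈ range (L + 1), M ℓ * C ℓ) := by
  set S := ∑ τ ∈ range (L + 1), Real.sqrt (V τ * C τ) with hSdef
  have hε2 : (0:ℝ) < ε ^ 2 := by positivity
  have hS : 0 < S := by
    apply Finset.sum_pos
    · intro τ hτ
      have hτL := Nat.lt_succ_iff.1 (mem_range.1 hτ)
      exact Real.sqrt_pos.2 (mul_pos (hV τ hτL) (hC τ hτL))
    · exact ⟨0, mem_range.2 (Nat.succ_pos L)⟩
  refine ⟨?_, ?_, ?_⟩
  · have h1 : ∀ ℓ ∈ range (L + 1),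
        V ℓ / N ℓ = ε ^ 2 / (2 * S) * Real.sqrt (V ℓ * C ℓ) := by
      intro ℓ hℓ
      have hℓL := Nat.lt_succ_iff.1 (mem_range.1 hℓ)
      have hv := hV ℓ hℓL
      have hc := hC ℓ hℓL
      have ha : 0 < Real.sqrt (V ℓ) := Real.sqrt_pos.2 hv
      have hb : 0 < Real.sqrt (C ℓ) := Real.sqrt_pos.2 hc
      rw [hN ℓ hℓL, Real.sqrt_div hv.le, Real.sqrt_mul hv.le]
      nth_rw 1 [← Real.mul_self_sqrt hv.le]
      field_simp
    rw [Finset.sum_congr rfl h1, ← Finset.mul_sum, ← hSdef]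
    field_simp
  · have h2 : ∀ ℓ ∈ range (L + 1),
        N ℓ * C ℓ = 2 / ε ^ 2 * S * Real.sqrt (V ℓ * C ℓ) := by
      intro ℓ hℓ
      have hℓL := Nat.lt_succ_iff.1 (mem_range.1 hℓ)
      have hv := hV ℓ hℓL
      have hc := hC ℓ hℓL
      have hb : 0 < Real.sqrt (C ℓ) := Real.sqrt_pos.2 hc
      rw [hN ℓ hℓL, Real.sqrt_div hv.le, Real.sqrt_mul hv.le]
      field_simp
      nth_rw 1 [← Real.mul_self_sqrt hc.le]
      ring
    rw [Finset.sum_congr rfl h2, ← Finset.mul_sum, ← hSdef, sq]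
    ring
  · intro M hM hcon
    have cs := Finset.sum_mul_sq_le_sq_mul_sq (range (L + 1))
      (fun i => Real.sqrt (V i / M i)) (fun i => Real.sqrt (M i * C i))
    have hfg : ∀ i ∈ range (L + 1),
        Real.sqrt (V i / M i) * Real.sqrt (M i * C i) = Real.sqrt (V i * C i) := by
      intro i hi
      have hiL := Nat.lt_succ_iff.1 (mem_range.1 hi)
      have hm := hM i hiL
      have hv := hV i hiL
      have hc := hC i hiL
      rw [← Real.sqrt_mul (by positivity)]
      congr 1
      field_simp
    have hf2 : ∀ i ∈ range (L + 1),
        Real.sqrt (V i / M i) ^ 2 = V i / M i := by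
      intro i hi
      have hiL := Nat.lt_succ_iff.1 (mem_range.1 hi)
      have hm := hM i hiL
      have hv := hV i hiL
      exact Real.sq_sqrt (by positivity)
    have hg2 : ∀ i ∈ range (L + 1),
        Real.sqrt (M i * C i) ^ 2 = M i * C i := by
      intro i hi
      have hiL := Nat.lt_succ_iff.1 (mem_range.1 hi)
      have := hM i hiL
      have := hC i hiL
      exact Real.sq_sqrt (by positivity)
    rw [Finset.sum_congr rfl hfg, Finset.sum_congr rfl hf2,
      Finset.sum_congr rfl hg2] at cs
    have hT : 0 < ∑ ℓ ∈ range (L + 1), M ℓ * C ℓ := by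
      apply Finset.sum_pos
      · intro i hi
        have hiL := Nat.lt_succ_iff.1 (mem_range.1 hi)
        exact mul_pos (hM i hiL) (hC i hiL)
      · exact ⟨0, mem_range.2 (Nat.succ_pos L)⟩
    set A := ∑ ℓ ∈ range (L + 1), V ℓ / M ℓ
    set T := ∑ ℓ ∈ range (L + 1), M ℓ * C ℓ
    rw [div_mul_eq_mul_div, div_le_iff₀ hε2]
    nlinarith [mul_le_mul_of_nonneg_right hcon hT.le]
end

section
/- Let (Ω, P) be a probability space, L a natural number, N_0 ≥ N_1 ≥ ... ≥ N_L positive integers, and for each k = 0, ..., L and each n = 1, ..., N_k and each level ℓ = 0, ..., k let D_{ℓ,k,n} : Ω → ℝ be an integrable random variable with E[D_{ℓ,k,n}] = μ_ℓ − μ_{ℓ−1}, where μ_{−1} = 0 and μ_0, ..., μ_L are given real numbers. Then the Multigrid Multilevel Monte Carlo estimator with sample recycling, Q_reuse = Σ_{ℓ=0}^{L} (1 / Σ_{i=ℓ}^{L} N_i) Σ_{k=ℓ}^{L} Σ_{n=1}^{N_k} D_{ℓ,k,n}, is unbiased for μ_L, i.e., E[Q_reuse] = μ_L. -/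
open Finset MeasureTheory

/-- Unbiasedness of the Multigrid Multilevel Monte Carlo estimator with sample
recycling: if every level-`ℓ` difference `D ℓ k n` (evaluated at the `n`-th
sample drawn for level `k ≥ ℓ`) has expectation `μ ℓ - μ (ℓ-1)` (with
`μ₋₁ = 0`), then the MG-MLMC estimator has expectation `μ L`. -/
theorem mgmlmc_unbiased
    {Ω : Type*} [MeasurableSpace Ω] (P : Measure Ω) [IsProbabilityMeasure P]
    (L : ℕ) (N : ℕ → ℕ) (hNpos : ∀ k ≤ L, 0 < N k)
    (hNdec : ∀ k, k < L → N (k + 1) ≤ N k)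
    (D : ℕ → ℕ → ℕ → Ω → ℝ) (μ : ℕ → ℝ)
    (hint : ∀ ℓ k, ℓ ≤ k → k ≤ L → ∀ n < N k, Integrable (D ℓ k n) P)
    (hmean : ∀ ℓ k, ℓ ≤ k → k ≤ L → ∀ n < N k,
      ∫ ω, D ℓ k n ω ∂P = μ ℓ - (if ℓ = 0 then 0 else μ (ℓ - 1))) :
    ∫ ω, (∑ ℓ ∈ range (L + 1),
        (∑ i ∈ Icc ℓ L, (N i : ℝ))⁻¹ *
          ∑ k ∈ Icc ℓ L, ∑ n ∈ range (N k), D ℓ k n ω) ∂P = μ L := by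
  have hintsum : ∀ ℓ ∈ range (L + 1),
      Integrable (fun ω => ∑ k ∈ Icc ℓ L, ∑ n ∈ range (N k), D ℓ k n ω) P := by
    intro ℓ hℓ
    rw [mem_range, Nat.lt_succ_iff] at hℓ
    refine integrable_finset_sum _ fun k hk => integrable_finset_sum _ fun n hn => ?_
    rw [mem_Icc] at hk
    exact hint ℓ k hk.1 hk.2 n (mem_range.mp hn)
  rw [integral_finset_sum _ (fun ℓ hℓ => (hintsum ℓ hℓ).const_mul _)]
  have key : ∀ ℓ ∈ range (L + 1),
      (∑ i ∈ Icc ℓ L, (N i : ℝ))⁻¹ *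
        ∫ ω, (∑ k ∈ Icc ℓ L, ∑ n ∈ range (N k), D ℓ k n ω) ∂P
      = μ ℓ - (if ℓ = 0 then 0 else μ (ℓ - 1)) := by
    intro ℓ hℓ
    rw [mem_range, Nat.lt_succ_iff] at hℓ
    have hS : (0 : ℝ) < ∑ i ∈ Icc ℓ L, (N i : ℝ) := by
      refine sum_pos' (fun i _ => by positivity) ⟨ℓ, mem_Icc.mpr ⟨le_rfl, hℓ⟩, ?_⟩
      exact_mod_cast hNpos ℓ hℓ
    rw [integral_finset_sum _ (fun k hk => by
      rw [mem_Icc] at hk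
      exact integrable_finset_sum _ fun n hn =>
        hint ℓ k hk.1 hk.2 n (mem_range.mp hn))]
    have : ∀ k ∈ Icc ℓ L,
        ∫ ω, (∑ n ∈ range (N k), D ℓ k n ω) ∂P
          = (N k : ℝ) * (μ ℓ - (if ℓ = 0 then 0 else μ (ℓ - 1))) := by
      intro k hk
      rw [mem_Icc] at hk
      rw [integral_finset_sum _ (fun n hn =>
        hint ℓ k hk.1 hk.2 n (mem_range.mp hn))]
      rw [Finset.sum_congr rfl (fun n hn => hmean ℓ k hk.1 hk.2 n (mem_range.mp hn))]
      simp [mul_comm]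
      split_ifs <;> ring
    rw [Finset.sum_congr rfl this, ← Finset.sum_mul, ← mul_assoc,
      inv_mul_cancel₀ hS.ne', one_mul]
  have h2 : ∀ ℓ ∈ range (L + 1),
      ∫ ω, ((∑ i ∈ Icc ℓ L, (N i : ℝ))⁻¹ *
          ∑ k ∈ Icc ℓ L, ∑ n ∈ range (N k), D ℓ k n ω) ∂P
        = μ ℓ - (if ℓ = 0 then 0 else μ (ℓ - 1)) := fun ℓ hℓ => by
    rw [MeasureTheory.integral_const_mul]; exact key ℓ hℓ
  rw [Finset.sum_congr rfl h2]
  have : ∀ ℓ, μ ℓ - (if ℓ = 0 then 0 else μ (ℓ - 1))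
      = (fun n => if n = 0 then (0:ℝ) else μ (n - 1)) (ℓ + 1)
        - (fun n => if n = 0 then (0:ℝ) else μ (n - 1)) ℓ := by
    intro ℓ; simp
  rw [Finset.sum_congr rfl fun ℓ _ => this ℓ,
    Finset.sum_range_sub (fun n => if n = 0 then (0:ℝ) else μ (n - 1)) (L + 1)]
  simp
end
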